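/- For every n ≥ 2 and every subset A of L: (1) (X, τ(A)) is perfect if and only if A is a Gδ-set in L with its Euclidean subspace topology; (2) (X, τ(A)) is Lindelöf if and only if L \ A does not contain any uncountable subset closed in L with its Euclidean subspace topology; (3) (X, τ(A)) is σ-compact if and only if A is an Fσ-set in L with its Euclidean subspace topology and L \ A is countable. -/

import Mathlib

open Metric Set TopologicalSpace

noncomputable section

/-- The last coordinate `x (n-1)` of a point of `EuclideanSpace ℝ (Fin n)`
(junk value `0` if `n = 0`). -/
def lastCoord (n : ℕ) (x : EuclideanSpace ℝ (Fin n)) : ℝ :=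
  if h : 0 < n then x ⟨n - 1, Nat.sub_lt h one_pos⟩ else 0

/-- The closed upper half-space `X = {x : x (n-1) ≥ 0}`. -/
def HalfSpace (n : ℕ) : Set (EuclideanSpace ℝ (Fin n)) := {x | 0 ≤ lastCoord n x}

/-- The open upper half-space `P = {x : x (n-1) > 0}`. -/
def OpenHalf (n : ℕ) : Set (EuclideanSpace ℝ (Fin n)) := {x | 0 < lastCoord n x}

/-- The boundary hyperplane `L = {x : x (n-1) = 0}`. -/
def Bdry (n : ℕ) : Set (EuclideanSpace ℝ (Fin n)) := {x | lastCoord n x = 0}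

/-- The `n`-th standard basis vector `e` (junk value `0` if `n = 0`). -/
def eVec (n : ℕ) : EuclideanSpace ℝ (Fin n) :=
  if h : 0 < n then EuclideanSpace.single ⟨n - 1, Nat.sub_lt h one_pos⟩ (1 : ℝ) else 0

/-- The tangent ball `B̃(a, ε) = {a} ∪ B(a + ε • e, ε)`. -/
def tangentBall (n : ℕ) (a : EuclideanSpace ℝ (Fin n)) (ε : ℝ) :
    Set (EuclideanSpace ℝ (Fin n)) :=
  {a} ∪ ball (a + ε • eVec n) ε

/-- The generating family for the topology `τ(A)` on `X`:
balls `B(a,ε)` with `a ∈ P`, `0 < ε < a (n-1)`; traces `B(a,ε) ∩ X` with `a ∈ A`, `ε > 0`;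
and tangent balls `B̃(a,ε)` with `a ∈ L \ A`, `ε > 0`. -/
def niemGen (n : ℕ) (A : Set (EuclideanSpace ℝ (Fin n))) : Set (Set (HalfSpace n)) :=
  {s | ∃ a ∈ OpenHalf n, ∃ ε, 0 < ε ∧ ε < lastCoord n a ∧
      s = Subtype.val ⁻¹' ball a ε} ∪
  {s | ∃ a ∈ A, ∃ ε, 0 < ε ∧ s = Subtype.val ⁻¹' ball a ε} ∪
  {s | ∃ a ∈ Bdry n \ A, ∃ ε, 0 < ε ∧ s = Subtype.val ⁻¹' tangentBall n a ε}

/-- The topology `τ(A)` on `X`; `τ(∅)` is the Niemytzki topology `τ_N`. -/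
def tau (n : ℕ) (A : Set (EuclideanSpace ℝ (Fin n))) : TopologicalSpace (HalfSpace n) :=
  generateFrom (niemGen n A)

/-- The inclusion of `L` into `X`. -/
def inclLX (n : ℕ) (x : Bdry n) : HalfSpace n := ⟨x.1, le_of_eq x.2.symm⟩

/-- The subspace topology `τ(A)|_L` on `L` induced from `(X, τ(A))`. -/
def tauL (n : ℕ) (A : Set (EuclideanSpace ℝ (Fin n))) : TopologicalSpace (Bdry n) :=
  TopologicalSpace.induced (inclLX n) (tau n A)

/-- A space is perfect if every closed set is a `Gδ`-set. -/
def IsPerfectSpace (X : Type*) [TopologicalSpace X] : Prop :=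
  ∀ s : Set X, IsClosed s → IsGδ s

/-- An `Fσ`-set: a countable union of closed sets. -/
def IsFsigma {X : Type*} [TopologicalSpace X] (s : Set X) : Prop :=
  ∃ F : ℕ → Set X, (∀ i, IsClosed (F i)) ∧ s = ⋃ i, F i

/-- Countably paracompact: every countable open cover admits a locally finite open refinement. -/
def CountablyParacompact (X : Type*) [TopologicalSpace X] : Prop :=
  ∀ u : ℕ → Set X, (∀ i, IsOpen (u i)) → (⋃ i, u i) = Set.univ →
    ∃ (ι : Type) (v : ι → Set X), (∀ j, IsOpen (v j)) ∧ (⋃ j, v j) = Set.univ ∧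
      LocallyFinite v ∧ ∀ j, ∃ i, v j ⊆ u i

/-- A zero set: the zero locus of a continuous real-valued function. -/
def IsZeroSet {X : Type*} [TopologicalSpace X] (s : Set X) : Prop :=
  ∃ f : X → ℝ, Continuous f ∧ s = f ⁻¹' {0}

/-- `Y` is z-embedded in `X` if every zero set of the subspace `Y`
is the trace on `Y` of a zero set of `X`. -/
def ZEmbedded {X : Type*} [TopologicalSpace X] (Y : Set X) : Prop :=
  ∀ s : Set Y, IsZeroSet s → ∃ Z : Set X, IsZeroSet Z ∧ s = Subtype.val ⁻¹' Z

/-- `Y` is `C*`-embedded in `X` if every bounded continuous real-valued function on the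
subspace `Y` extends to a bounded continuous function on `X`. -/
def CStarEmbedded {X : Type*} [TopologicalSpace X] (Y : Set X) : Prop :=
  ∀ f : Y → ℝ, Continuous f → (∃ M, ∀ y, |f y| ≤ M) →
    ∃ g : X → ℝ, Continuous g ∧ (∃ M, ∀ x, |g x| ≤ M) ∧ ∀ y : Y, g ↑y = f y
end
section AuxNiemytzki

open Topology

variable {n : ℕ}

lemma abs_sub_coord_le (x y : EuclideanSpace ℝ (Fin n)) (i : Fin n) :
    |x i - y i| ≤ dist x y := by
  rw [EuclideanSpace.dist_eq]
  have h1 : |x i - y i| = √(dist (x i) (y i) ^ 2) := by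
    rw [Real.sqrt_sq_eq_abs, Real.dist_eq, abs_abs]
  rw [h1]
  exact Real.sqrt_le_sqrt (Finset.single_le_sum (f := fun j => dist (x j) (y j) ^ 2)
    (fun j _ => sq_nonneg _) (Finset.mem_univ i))

lemma abs_lastCoord_sub_le (hn : 0 < n) (x y : EuclideanSpace ℝ (Fin n)) :
    |lastCoord n x - lastCoord n y| ≤ dist x y := by
  simp only [lastCoord, dif_pos hn]
  exact abs_sub_coord_le x y _

lemma lastCoord_add_smul_eVec (hn : 0 < n) (a : EuclideanSpace ℝ (Fin n)) (ε : ℝ) :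
    lastCoord n (a + ε • eVec n) = lastCoord n a + ε := by
  simp only [lastCoord, eVec, dif_pos hn, PiLp.add_apply, PiLp.smul_apply,
    EuclideanSpace.single_apply, smul_eq_mul]
  norm_num

lemma norm_eVec (hn : 0 < n) : ‖eVec n‖ = 1 := by
  simp only [eVec, dif_pos hn, EuclideanSpace.norm_single, norm_one]

lemma dist_add_smul_eVec (hn : 0 < n) (a : EuclideanSpace ℝ (Fin n)) (δ ε : ℝ) :
    dist (a + δ • eVec n) (a + ε • eVec n) = |δ - ε| := by
  rw [dist_eq_norm, add_sub_add_left_eq_sub, ← sub_smul, norm_smul, norm_eVec hn,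
    mul_one, Real.norm_eq_abs]

lemma dist_add_smul_eVec_self (hn : 0 < n) (a : EuclideanSpace ℝ (Fin n)) (δ : ℝ) :
    dist (a + δ • eVec n) a = |δ| := by
  rw [dist_eq_norm, add_sub_cancel_left, norm_smul, norm_eVec hn, mul_one, Real.norm_eq_abs]

-- points of a ball around a point high enough are in P
lemma lastCoord_pos_of_mem_ball (hn : 0 < n) {c y : EuclideanSpace ℝ (Fin n)} {ε : ℝ}
    (hεc : ε ≤ lastCoord n c) (hy : y ∈ ball c ε) : 0 < lastCoord n y := by
  have := abs_lastCoord_sub_le hn c y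
  rw [mem_ball] at hy
  rw [dist_comm] at hy
  have h2 : lastCoord n c - lastCoord n y ≤ |lastCoord n c - lastCoord n y| := le_abs_self _
  linarith [(abs_lt.1 (lt_of_le_of_lt this hy)).2, (abs_lt.1 (lt_of_le_of_lt this hy)).1]

lemma mem_tangentBall_self (a : EuclideanSpace ℝ (Fin n)) (ε : ℝ) :
    a ∈ tangentBall n a ε := Or.inl rfl

lemma lastCoord_pos_of_mem_tbBall (hn : 0 < n) {a y : EuclideanSpace ℝ (Fin n)} {ε : ℝ}
    (ha : lastCoord n a = 0) (hy : y ∈ ball (a + ε • eVec n) ε) : 0 < lastCoord n y := by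
  apply lastCoord_pos_of_mem_ball hn (c := a + ε • eVec n) _ hy
  rw [lastCoord_add_smul_eVec hn, ha, zero_add]

lemma tangentBall_subset_halfSpace (hn : 0 < n) {a : EuclideanSpace ℝ (Fin n)} {ε : ℝ}
    (ha : a ∈ Bdry n) : tangentBall n a ε ⊆ HalfSpace n := by
  rintro y (rfl | hy)
  · exact le_of_eq (ha.symm)
  · exact le_of_lt (lastCoord_pos_of_mem_tbBall hn ha hy)

lemma eq_of_mem_tangentBall_bdry (hn : 0 < n) {a y : EuclideanSpace ℝ (Fin n)} {ε : ℝ}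
    (ha : a ∈ Bdry n) (hy : y ∈ tangentBall n a ε) (hyL : lastCoord n y = 0) : y = a := by
  rcases hy with h | h
  · exact h
  · exact absurd hyL (ne_of_gt (lastCoord_pos_of_mem_tbBall hn ha h))

lemma tangentBall_mono (hn : 0 < n) {a : EuclideanSpace ℝ (Fin n)} {δ ε : ℝ}
    (hδε : δ ≤ ε) : tangentBall n a δ ⊆ tangentBall n a ε := by
  rintro y (rfl | hy)
  · exact Or.inl rfl
  · right
    rw [mem_ball] at hy ⊢
    calc dist y (a + ε • eVec n) ≤ dist y (a + δ • eVec n) + dist (a + δ • eVec n) (a + ε • eVec n) :=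
          dist_triangle _ _ _
      _ = dist y (a + δ • eVec n) + (ε - δ) := by
          rw [dist_add_smul_eVec hn, abs_of_nonpos (by linarith), neg_sub]
      _ < δ + (ε - δ) := by linarith
      _ = ε := by ring

lemma tangentBall_subset_ball (hn : 0 < n) {a c : EuclideanSpace ℝ (Fin n)} {δ r : ℝ}
    (hδ : 0 < δ) (h : dist a c + 2 * δ ≤ r) : tangentBall n a δ ⊆ ball c r := by
  rintro y (rfl | hy)
  · rw [mem_ball]; linarith [dist_nonneg (x := y) (y := c)]
  · rw [mem_ball] at hy ⊢
    have h1 : dist (a + δ • eVec n) a = δ := by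
      rw [dist_add_smul_eVec_self hn, abs_of_pos hδ]
    calc dist y c ≤ dist y (a + δ • eVec n) + dist (a + δ • eVec n) a + dist a c :=
          dist_triangle4 _ _ _ _
      _ < δ + δ + dist a c := by linarith
      _ ≤ r := by linarith

lemma halfSpace_eq_union : HalfSpace n = OpenHalf n ∪ Bdry n := by
  ext x
  simp only [HalfSpace, OpenHalf, Bdry, mem_setOf_eq, mem_union]
  constructor
  · intro h; rcases lt_or_eq_of_le h with h' | h'
    · exact Or.inl h'
    · exact Or.inr h'.symm
  · rintro (h | h)
    · exact le_of_lt h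
    · exact le_of_eq h.symm

variable {A : Set (EuclideanSpace ℝ (Fin n))}

lemma isOpen_gen1 {c : EuclideanSpace ℝ (Fin n)} {ε : ℝ} (hc : c ∈ OpenHalf n)
    (h1 : 0 < ε) (h2 : ε < lastCoord n c) :
    IsOpen[tau n A] (Subtype.val ⁻¹' ball c ε) :=
  TopologicalSpace.GenerateOpen.basic _ (Or.inl (Or.inl ⟨c, hc, ε, h1, h2, rfl⟩))

lemma isOpen_gen2 {a : EuclideanSpace ℝ (Fin n)} {ε : ℝ} (ha : a ∈ A) (hε : 0 < ε) :
    IsOpen[tau n A] (Subtype.val ⁻¹' ball a ε) :=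
  TopologicalSpace.GenerateOpen.basic _ (Or.inl (Or.inr ⟨a, ha, ε, hε, rfl⟩))

lemma isOpen_gen3 {x : EuclideanSpace ℝ (Fin n)} {ε : ℝ} (hx : x ∈ Bdry n \ A) (hε : 0 < ε) :
    IsOpen[tau n A] (Subtype.val ⁻¹' tangentBall n x ε) :=
  TopologicalSpace.GenerateOpen.basic _ (Or.inr ⟨x, hx, ε, hε, rfl⟩)

/-- The key neighborhood-basis lemma for `τ(A)`. -/
lemma tau_nbhd (hn : 0 < n) (hA : A ⊆ Bdry n)
    {U : Set (HalfSpace n)} (hU : IsOpen[tau n A] U) :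
    ∀ z, z ∈ U →
    (z.1 ∈ OpenHalf n → ∃ δ, 0 < δ ∧ δ < lastCoord n z.1 ∧ Subtype.val ⁻¹' ball z.1 δ ⊆ U) ∧
    (z.1 ∈ A → ∃ δ, 0 < δ ∧ Subtype.val ⁻¹' ball z.1 δ ⊆ U) ∧
    (z.1 ∈ Bdry n \ A → ∃ δ, 0 < δ ∧ Subtype.val ⁻¹' tangentBall n z.1 δ ⊆ U) := by
  have hU' : TopologicalSpace.GenerateOpen (niemGen n A) U := hU
  clear hU
  induction hU' with
  | basic s hs =>
    intro z hz
    rcases hs with (⟨c, hc, ε, hε, hεc, rfl⟩ | ⟨a, haA, ε, hε, rfl⟩) | ⟨x, hx, ε, hε, rfl⟩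
    · -- ball inside P
      have hzc : dist z.1 c < ε := hz
      refine ⟨fun hzP => ?_, fun hzA => ?_, fun hzL => ?_⟩
      · refine ⟨min (ε - dist z.1 c) (lastCoord n z.1) / 2,
          div_pos (lt_min (by linarith) hzP) two_pos, ?_, ?_⟩
        · calc min (ε - dist z.1 c) (lastCoord n z.1) / 2 ≤ lastCoord n z.1 / 2 := by
                have := min_le_right (ε - dist z.1 c) (lastCoord n z.1); linarith
            _ < lastCoord n z.1 := half_lt_self hzP
        · intro w hw
          have hw' : dist w.1 z.1 < min (ε - dist z.1 c) (lastCoord n z.1) / 2 := hw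
          have h3 := min_le_left (ε - dist z.1 c) (lastCoord n z.1)
          show dist w.1 c < ε
          calc dist w.1 c ≤ dist w.1 z.1 + dist z.1 c := dist_triangle _ _ _
            _ < ε := by linarith
      · exfalso
        have := lastCoord_pos_of_mem_ball hn (le_of_lt hεc) hz
        have h0 : lastCoord n z.1 = 0 := hA hzA
        rw [h0] at this; exact lt_irrefl _ this
      · exfalso
        have := lastCoord_pos_of_mem_ball hn (le_of_lt hεc) hz
        have h0 : lastCoord n z.1 = 0 := hzL.1
        rw [h0] at this; exact lt_irrefl _ this
    · -- trace ball at a ∈ A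
      have hza : dist z.1 a < ε := hz
      refine ⟨fun hzP => ?_, fun _ => ?_, fun hzL => ?_⟩
      · refine ⟨min (ε - dist z.1 a) (lastCoord n z.1) / 2,
          div_pos (lt_min (by linarith) hzP) two_pos, ?_, ?_⟩
        · calc min (ε - dist z.1 a) (lastCoord n z.1) / 2 ≤ lastCoord n z.1 / 2 := by
                have := min_le_right (ε - dist z.1 a) (lastCoord n z.1); linarith
            _ < lastCoord n z.1 := half_lt_self hzP
        · intro w hw
          have hw' : dist w.1 z.1 < min (ε - dist z.1 a) (lastCoord n z.1) / 2 := hw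
          have h3 := min_le_left (ε - dist z.1 a) (lastCoord n z.1)
          show dist w.1 a < ε
          calc dist w.1 a ≤ dist w.1 z.1 + dist z.1 a := dist_triangle _ _ _
            _ < ε := by linarith
      · refine ⟨ε - dist z.1 a, by linarith, ?_⟩
        intro w hw
        have hw' : dist w.1 z.1 < ε - dist z.1 a := hw
        show dist w.1 a < ε
        calc dist w.1 a ≤ dist w.1 z.1 + dist z.1 a := dist_triangle _ _ _
          _ < ε := by linarith
      · refine ⟨(ε - dist z.1 a) / 3, by linarith, ?_⟩
        -- tangent into ball
        intro w hw
        show dist w.1 a < ε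
        have : tangentBall n z.1 ((ε - dist z.1 a) / 3) ⊆ ball a ε :=
          tangentBall_subset_ball hn (by linarith) (by linarith)
        exact this hw
    · -- tangent ball at x ∈ L \ A
      refine ⟨fun hzP => ?_, fun hzA => ?_, fun hzL => ?_⟩
      · have hz' : z.1 ∈ ball (x + ε • eVec n) ε := by
          rcases hz with h | h
          · exfalso
            have h0 : lastCoord n z.1 = 0 := by rw [show z.1 = x from h]; exact hx.1
            have hzP' : 0 < lastCoord n z.1 := hzP
            rw [h0] at hzP'; exact lt_irrefl _ hzP'
          · exact h
        have hd : dist z.1 (x + ε • eVec n) < ε := hz'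
        refine ⟨min (ε - dist z.1 (x + ε • eVec n)) (lastCoord n z.1) / 2,
          div_pos (lt_min (by linarith) hzP) two_pos, ?_, ?_⟩
        · calc min (ε - dist z.1 (x + ε • eVec n)) (lastCoord n z.1) / 2
              ≤ lastCoord n z.1 / 2 := by
                have := min_le_right (ε - dist z.1 (x + ε • eVec n)) (lastCoord n z.1); linarith
            _ < lastCoord n z.1 := half_lt_self hzP
        · intro w hw
          have hw' : dist w.1 z.1 < min (ε - dist z.1 (x + ε • eVec n)) (lastCoord n z.1) / 2 := hw
          have h3 := min_le_left (ε - dist z.1 (x + ε • eVec n)) (lastCoord n z.1)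
          refine Or.inr ?_
          show dist w.1 (x + ε • eVec n) < ε
          calc dist w.1 (x + ε • eVec n) ≤ dist w.1 z.1 + dist z.1 (x + ε • eVec n) :=
                dist_triangle _ _ _
            _ < ε := by linarith
      · exfalso
        have := eq_of_mem_tangentBall_bdry hn hx.1 hz (hA hzA)
        rw [this] at hzA; exact hx.2 hzA
      · have hzx : z.1 = x := eq_of_mem_tangentBall_bdry hn hx.1 hz hzL.1
        refine ⟨ε, hε, ?_⟩
        rw [hzx]
  | univ =>
    intro z _
    refine ⟨fun hzP => ⟨lastCoord n z.1 / 2, half_pos hzP, half_lt_self hzP, subset_univ _⟩,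
      fun _ => ⟨1, one_pos, subset_univ _⟩, fun _ => ⟨1, one_pos, subset_univ _⟩⟩
  | inter s t _ _ ihs iht =>
    intro z hz
    obtain ⟨hs1, hs2, hs3⟩ := ihs z hz.1
    obtain ⟨ht1, ht2, ht3⟩ := iht z hz.2
    refine ⟨fun hzP => ?_, fun hzA => ?_, fun hzL => ?_⟩
    · obtain ⟨δ1, hδ1, hδ1', hsub1⟩ := hs1 hzP
      obtain ⟨δ2, hδ2, hδ2', hsub2⟩ := ht1 hzP
      refine ⟨min δ1 δ2, lt_min hδ1 hδ2, lt_of_le_of_lt (min_le_left _ _) hδ1', ?_⟩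
      exact subset_inter
        (fun w hw => hsub1 (ball_subset_ball (min_le_left _ _) hw))
        (fun w hw => hsub2 (ball_subset_ball (min_le_right _ _) hw))
    · obtain ⟨δ1, hδ1, hsub1⟩ := hs2 hzA
      obtain ⟨δ2, hδ2, hsub2⟩ := ht2 hzA
      refine ⟨min δ1 δ2, lt_min hδ1 hδ2, ?_⟩
      exact subset_inter
        (fun w hw => hsub1 (ball_subset_ball (min_le_left _ _) hw))
        (fun w hw => hsub2 (ball_subset_ball (min_le_right _ _) hw))
    · obtain ⟨δ1, hδ1, hsub1⟩ := hs3 hzL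
      obtain ⟨δ2, hδ2, hsub2⟩ := ht3 hzL
      refine ⟨min δ1 δ2, lt_min hδ1 hδ2, ?_⟩
      exact subset_inter
        (fun w hw => hsub1 (tangentBall_mono hn (min_le_left _ _) hw))
        (fun w hw => hsub2 (tangentBall_mono hn (min_le_right _ _) hw))
  | sUnion S _ ih =>
    intro z hz
    obtain ⟨s, hsS, hzs⟩ := hz
    obtain ⟨h1, h2, h3⟩ := ih s hsS z hzs
    refine ⟨fun hzP => ?_, fun hzA => ?_, fun hzL => ?_⟩
    · obtain ⟨δ, hδ, hδ', hsub⟩ := h1 hzP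
      exact ⟨δ, hδ, hδ', hsub.trans (subset_sUnion_of_mem hsS)⟩
    · obtain ⟨δ, hδ, hsub⟩ := h2 hzA
      exact ⟨δ, hδ, hsub.trans (subset_sUnion_of_mem hsS)⟩
    · obtain ⟨δ, hδ, hsub⟩ := h3 hzL
      exact ⟨δ, hδ, hsub.trans (subset_sUnion_of_mem hsS)⟩

lemma isOpen_tau_of_nbhds {U : Set (HalfSpace n)}
    (h : ∀ z ∈ U, ∃ V, IsOpen[tau n A] V ∧ z ∈ V ∧ V ⊆ U) : IsOpen[tau n A] U := by
  letI := tau n A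
  exact isOpen_iff_forall_mem_open.2 fun z hz => by
    obtain ⟨V, h1, h2, h3⟩ := h z hz
    exact ⟨V, h3, h1, h2⟩

lemma tau_le_euclid (hn : 0 < n) (hA : A ⊆ Bdry n) {V : Set (EuclideanSpace ℝ (Fin n))}
    (hV : IsOpen V) : IsOpen[tau n A] (Subtype.val ⁻¹' V : Set (HalfSpace n)) := by
  apply isOpen_tau_of_nbhds
  intro z hz
  obtain ⟨δ, hδ, hball⟩ := Metric.isOpen_iff.1 hV z.1 hz
  have hz2 : (0:ℝ) ≤ lastCoord n z.1 := z.2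
  rcases lt_or_eq_of_le hz2 with hzP | hzL
  · refine ⟨Subtype.val ⁻¹' ball z.1 (min δ (lastCoord n z.1) / 2),
      isOpen_gen1 hzP (div_pos (lt_min hδ hzP) two_pos) ?_, ?_, ?_⟩
    · calc min δ (lastCoord n z.1) / 2 ≤ lastCoord n z.1 / 2 := by
            have := min_le_right δ (lastCoord n z.1); linarith
        _ < lastCoord n z.1 := half_lt_self hzP
    · show dist z.1 z.1 < _
      rw [dist_self]; exact div_pos (lt_min hδ hzP) two_pos
    · intro w hw
      apply hball
      have hw' : dist w.1 z.1 < min δ (lastCoord n z.1) / 2 := hw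
      have := min_le_left δ (lastCoord n z.1)
      exact mem_ball.2 (by linarith)
  · by_cases hzA : z.1 ∈ A
    · refine ⟨Subtype.val ⁻¹' ball z.1 δ, isOpen_gen2 hzA hδ, ?_, fun w hw => hball hw⟩
      show dist z.1 z.1 < δ; rw [dist_self]; exact hδ
    · refine ⟨Subtype.val ⁻¹' tangentBall n z.1 (δ / 3),
        isOpen_gen3 ⟨hzL.symm, hzA⟩ (by linarith), mem_tangentBall_self _ _, ?_⟩
      intro w hw
      apply hball
      exact tangentBall_subset_ball hn (by linarith) (by rw [dist_self]; linarith) hw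

lemma continuous_val_tau (hn : 0 < n) (hA : A ⊆ Bdry n) :
    Continuous[tau n A, inferInstance] (Subtype.val : HalfSpace n → EuclideanSpace ℝ (Fin n)) := by
  rw [continuous_def]
  exact fun V hV => tau_le_euclid hn hA hV

lemma continuous_lastCoord : Continuous (lastCoord n) := by
  rcases Nat.eq_zero_or_pos n with h | hn
  · have : lastCoord n = fun _ => (0 : ℝ) := by
      funext x; exact dif_neg (by omega)
    rw [this]; exact continuous_const
  · exact LipschitzWith.continuous (K := 1) (LipschitzWith.of_dist_le_mul fun x y => by
      rw [Real.dist_eq, NNReal.coe_one, one_mul]; exact abs_lastCoord_sub_le hn x y)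

lemma isClosed_bdry : IsClosed (Bdry n) :=
  isClosed_eq continuous_lastCoord continuous_const

lemma subtype_ball_eq {α : Type*} [PseudoMetricSpace α] {p : α → Prop} (x : Subtype p) (r : ℝ) :
    ball x r = Subtype.val ⁻¹' ball x.1 r := by
  ext y
  simp only [mem_ball, mem_preimage, Subtype.dist_eq]

/-- `A` (as a subset of `X`) is `τ(A)`-closed. -/
lemma isClosed_Apre (hn : 0 < n) (hA : A ⊆ Bdry n) :
    IsClosed[tau n A] (Subtype.val ⁻¹' A : Set (HalfSpace n)) := by
  letI := tau n A
  rw [← isOpen_compl_iff]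
  apply isOpen_tau_of_nbhds
  intro z hz
  have hz2 : (0:ℝ) ≤ lastCoord n z.1 := z.2
  rcases lt_or_eq_of_le hz2 with hzP | hzL
  · refine ⟨Subtype.val ⁻¹' ball z.1 (lastCoord n z.1 / 2),
      isOpen_gen1 hzP (half_pos hzP) (half_lt_self hzP), ?_, ?_⟩
    · show dist z.1 z.1 < _; rw [dist_self]; exact half_pos hzP
    · intro w hw hwA
      have h1 : 0 < lastCoord n w.1 :=
        lastCoord_pos_of_mem_ball hn (by linarith [le_refl (lastCoord n z.1)]) hw
      have h2 : lastCoord n w.1 = 0 := hA hwA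
      rw [h2] at h1; exact lt_irrefl _ h1
  · have hzA : z.1 ∉ A := hz
    refine ⟨Subtype.val ⁻¹' tangentBall n z.1 1, isOpen_gen3 ⟨hzL.symm, hzA⟩ one_pos,
      mem_tangentBall_self _ _, ?_⟩
    intro w hw hwA
    have heq : w.1 = z.1 := eq_of_mem_tangentBall_bdry hn hzL.symm hw (hA hwA)
    have hwA' : w.1 ∈ A := hwA
    rw [heq] at hwA'; exact hzA hwA'

/-- Direction 1a: perfect implies `A` is Gδ in `L`. -/
lemma perfect_to_gdelta (hn : 0 < n) (hA : A ⊆ Bdry n)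
    (hperf : @IsPerfectSpace (HalfSpace n) (tau n A)) :
    IsGδ (Subtype.val ⁻¹' A : Set (Bdry n)) := by
  obtain ⟨T, hTo, hTc, hTeq⟩ := hperf _ (isClosed_Apre hn hA)
  refine ⟨(fun U => interior (inclLX n ⁻¹' U)) '' T, ?_, hTc.image _, ?_⟩
  · rintro t ⟨U, _, rfl⟩; exact isOpen_interior
  · ext y
    constructor
    · intro hy
      rintro t ⟨U, hU, rfl⟩
      have hyU : inclLX n y ∈ U := by
        have : inclLX n y ∈ (Subtype.val ⁻¹' A : Set (HalfSpace n)) := hy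
        rw [hTeq] at this
        exact this U hU
      obtain ⟨δ, hδ, hsub⟩ := ((tau_nbhd hn hA (hTo U hU)) _ hyU).2.1 hy
      apply mem_interior.2
      refine ⟨ball y δ, ?_, isOpen_ball, mem_ball_self hδ⟩
      intro w hw
      show inclLX n w ∈ U
      apply hsub
      show (inclLX n w).1 ∈ ball (inclLX n y).1 δ
      rw [subtype_ball_eq] at hw
      exact hw
    · intro hy
      have : inclLX n y ∈ ⋂₀ T := by
        intro U hU
        have h2 : y ∈ interior (inclLX n ⁻¹' U) := hy _ ⟨U, hU, rfl⟩
        exact mem_preimage.1 (interior_subset h2)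
      rw [← hTeq] at this
      exact this

/-- Direction 1b: if `A` is Gδ in `L`, then `(X, τ(A))` is perfect. -/
lemma gdelta_to_perfect (hn : 0 < n) (hA : A ⊆ Bdry n)
    (hGδ : IsGδ (Subtype.val ⁻¹' A : Set (Bdry n))) :
    @IsPerfectSpace (HalfSpace n) (tau n A) := by
  classical
  letI := tau n A
  obtain ⟨g, hgo, hgA⟩ : ∃ g : ℕ → Set (Bdry n), (∀ k, IsOpen (g k)) ∧
      (Subtype.val ⁻¹' A : Set (Bdry n)) = ⋂ k, g k := by
    obtain ⟨T, hTo, hTc, hTeq⟩ := hGδ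
    rcases T.eq_empty_or_nonempty with rfl | hne
    · exact ⟨fun _ => univ, fun _ => isOpen_univ, by simp [hTeq]⟩
    · obtain ⟨f, rfl⟩ := hTc.exists_eq_range hne
      exact ⟨f, fun k => hTo _ (mem_range_self k), by rw [hTeq, sInter_range]⟩
  intro F hF
  have hFc : IsOpen[tau n A] Fᶜ := hF.isOpen_compl
  have hr : ∀ k, ∀ z : HalfSpace n, z.1 ∈ A → ∃ r, 0 < r ∧
      (Subtype.val ⁻¹' ball z.1 r : Set (Bdry n)) ⊆ g k := by
    intro k z hz
    have hzB : (⟨z.1, hA hz⟩ : Bdry n) ∈ g k := by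
      have h1 : (⟨z.1, hA hz⟩ : Bdry n) ∈ (Subtype.val ⁻¹' A : Set (Bdry n)) := hz
      rw [hgA] at h1; exact mem_iInter.1 h1 k
    obtain ⟨ρ, hρ0, hρsub⟩ := Metric.isOpen_iff.1 (hgo k) _ hzB
    exact ⟨ρ, hρ0, (subtype_ball_eq (⟨z.1, hA hz⟩ : Bdry n) ρ) ▸ hρsub⟩
  choose r hr0 hrsub using hr
  have hs : ∀ z : HalfSpace n, z.1 ∈ A → z ∉ F → ∃ s, 0 < s ∧
      (Subtype.val ⁻¹' ball z.1 s : Set (HalfSpace n)) ⊆ Fᶜ := by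
    intro z hz hzF
    obtain ⟨s, hs0, hssub⟩ := ((tau_nbhd hn hA hFc) z hzF).2.1 hz
    exact ⟨s, hs0, hssub⟩
  choose s hs0 hssub using hs
  set WE : Set (EuclideanSpace ℝ (Fin n)) :=
    ⋃ (z : HalfSpace n) (h : z.1 ∈ A ∧ z ∉ F), ball z.1 (s z h.1 h.2) with hWE
  set D : ℕ → Set (EuclideanSpace ℝ (Fin n)) := fun j =>
    {x | lastCoord n x = 0} ∩ ⋂ (y) (_ : y ∉ WE), {x | 1/(j+1:ℝ) ≤ dist x y} with hD
  have hDclosed : ∀ j, IsClosed (D j) := fun j =>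
    (isClosed_eq continuous_lastCoord continuous_const).inter
      (isClosed_iInter fun y => isClosed_iInter fun _ =>
        isClosed_le continuous_const (continuous_id.dist continuous_const))
  have hDsub : ∀ j, D j ⊆ WE := by
    intro j x hx
    by_contra hxW
    have h2 : 1/(j+1:ℝ) ≤ dist x x := mem_iInter.1 (mem_iInter.1 hx.2 x) hxW
    rw [dist_self] at h2
    have : (0:ℝ) < 1/(j+1:ℝ) := by positivity
    linarith
  have hDdisjF : ∀ j, ∀ z : HalfSpace n, z ∈ F → z.1 ∉ D j := by
    intro j z hzF hzD
    obtain ⟨w, hw⟩ := mem_iUnion.1 (hDsub j hzD)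
    obtain ⟨h, hball⟩ := mem_iUnion.1 hw
    exact hssub w h.1 h.2 hball hzF
  have hWD : ∀ x, lastCoord n x = 0 → x ∈ WE → ∃ j, x ∈ D j := by
    intro x hx0 hxW
    obtain ⟨w, hw⟩ := mem_iUnion.1 hxW
    obtain ⟨h, hball⟩ := mem_iUnion.1 hw
    have hδ : 0 < s w h.1 h.2 - dist x w.1 := by
      have : dist x w.1 < s w h.1 h.2 := hball
      linarith
    obtain ⟨j, hj⟩ := exists_nat_one_div_lt hδ
    refine ⟨j, hx0, ?_⟩
    refine mem_iInter.2 fun y => mem_iInter.2 fun hyW => ?_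
    show 1/(j+1:ℝ) ≤ dist x y
    by_contra hlt
    push_neg at hlt
    refine hyW (mem_iUnion.2 ⟨w, mem_iUnion.2 ⟨h, ?_⟩⟩)
    show dist y w.1 < s w h.1 h.2
    calc dist y w.1 ≤ dist y x + dist x w.1 := dist_triangle _ _ _
      _ < 1/(j+1:ℝ) + dist x w.1 := by rw [dist_comm y x]; linarith
      _ < s w h.1 h.2 := by linarith
  set U : ℕ → Set (HalfSpace n) := fun k =>
    (⋃ (z : HalfSpace n) (_ : z ∈ F ∧ 0 < lastCoord n z.1),
        Subtype.val ⁻¹' ball z.1 (min (1/(k+1:ℝ)) (lastCoord n z.1 / 2))) ∪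
    ((⋃ (z : HalfSpace n) (_ : z ∈ F ∧ z.1 ∈ Bdry n \ A),
        Subtype.val ⁻¹' tangentBall n z.1 (1/(k+1:ℝ))) ∪
    (⋃ (z : HalfSpace n) (h : z ∈ F ∧ z.1 ∈ A),
        Subtype.val ⁻¹' ball z.1 (min (1/(k+1:ℝ)) (r k z h.2)))) with hU
  set O : ℕ → Set (HalfSpace n) := fun j =>
    if hj : (D j).Nonempty then
      (⋃ (z : HalfSpace n) (_ : z ∈ F ∧ 0 < lastCoord n z.1),
          Subtype.val ⁻¹' ball z.1 (lastCoord n z.1 / 2)) ∪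
      ((⋃ (z : HalfSpace n) (_ : z ∈ F ∧ z.1 ∈ Bdry n \ A),
          Subtype.val ⁻¹' tangentBall n z.1 1) ∪
      (⋃ (z : HalfSpace n) (h : z ∈ F ∧ z.1 ∈ A),
          Subtype.val ⁻¹' ball z.1 (infDist z.1 (D j))))
    else univ with hO
  have hUopen : ∀ k, IsOpen (U k) := by
    intro k
    have kpos : (0:ℝ) < 1/(k+1:ℝ) := by positivity
    refine IsOpen.union (isOpen_iUnion fun z => isOpen_iUnion fun h => ?_)
      (IsOpen.union (isOpen_iUnion fun z => isOpen_iUnion fun h => ?_)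
        (isOpen_iUnion fun z => isOpen_iUnion fun h => ?_))
    · exact isOpen_gen1 h.2 (lt_min kpos (half_pos h.2))
        (lt_of_le_of_lt (min_le_right _ _) (half_lt_self h.2))
    · exact isOpen_gen3 h.2 kpos
    · exact isOpen_gen2 h.2 (lt_min kpos (hr0 k z h.2))
  have hOopen : ∀ j, IsOpen (O j) := by
    intro j
    have hOj : O j = _ := congrFun hO j
    rw [hOj]
    split_ifs with hj
    · refine IsOpen.union (isOpen_iUnion fun z => isOpen_iUnion fun h => ?_)
        (IsOpen.union (isOpen_iUnion fun z => isOpen_iUnion fun h => ?_)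
          (isOpen_iUnion fun z => isOpen_iUnion fun h => ?_))
      · exact isOpen_gen1 h.2 (half_pos h.2) (half_lt_self h.2)
      · exact isOpen_gen3 h.2 one_pos
      · exact isOpen_gen2 h.2
          (((hDclosed j).notMem_iff_infDist_pos hj).1 (hDdisjF j z h.1))
    · exact isOpen_univ
  have hFU : ∀ k, F ⊆ U k := by
    intro k z hz
    rcases lt_or_eq_of_le (show (0:ℝ) ≤ lastCoord n z.1 from z.2) with hzP | hzL
    · left
      refine mem_iUnion.2 ⟨z, mem_iUnion.2 ⟨⟨hz, hzP⟩, ?_⟩⟩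
      show dist z.1 z.1 < _
      rw [dist_self]
      exact lt_min (by positivity) (half_pos hzP)
    · by_cases hzA : z.1 ∈ A
      · right; right
        refine mem_iUnion.2 ⟨z, mem_iUnion.2 ⟨⟨hz, hzA⟩, ?_⟩⟩
        show dist z.1 z.1 < _
        rw [dist_self]
        exact lt_min (by positivity) (hr0 k z hzA)
      · right; left
        exact mem_iUnion.2 ⟨z, mem_iUnion.2 ⟨⟨hz, hzL.symm, hzA⟩, mem_tangentBall_self _ _⟩⟩
  have hFO : ∀ j, F ⊆ O j := by
    intro j z hz
    have hOj : O j = _ := congrFun hO j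
    rw [hOj]
    split_ifs with hj
    · rcases lt_or_eq_of_le (show (0:ℝ) ≤ lastCoord n z.1 from z.2) with hzP | hzL
      · left
        refine mem_iUnion.2 ⟨z, mem_iUnion.2 ⟨⟨hz, hzP⟩, ?_⟩⟩
        show dist z.1 z.1 < _
        rw [dist_self]; exact half_pos hzP
      · by_cases hzA : z.1 ∈ A
        · right; right
          refine mem_iUnion.2 ⟨z, mem_iUnion.2 ⟨⟨hz, hzA⟩, ?_⟩⟩
          show dist z.1 z.1 < _
          rw [dist_self]
          exact ((hDclosed j).notMem_iff_infDist_pos hj).1 (hDdisjF j z hz)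
        · right; left
          exact mem_iUnion.2 ⟨z, mem_iUnion.2 ⟨⟨hz, hzL.symm, hzA⟩, mem_tangentBall_self _ _⟩⟩
    · exact mem_univ _
  have hFeq : F = (⋂ k, U k) ∩ (⋂ j, O j) := by
    apply Subset.antisymm
    · exact subset_inter (fun z hz => mem_iInter.2 fun k => hFU k hz)
        (fun z hz => mem_iInter.2 fun j => hFO j hz)
    · rintro z ⟨hzU, hzO⟩
      by_contra hzF
      have hzU' : ∀ k, z ∈ U k := mem_iInter.1 hzU
      rcases lt_or_eq_of_le (show (0:ℝ) ≤ lastCoord n z.1 from z.2) with hzP | hzL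
      · -- z in the open half-plane
        obtain ⟨δ, hδ0, hδlast, hδsub⟩ := ((tau_nbhd hn hA hFc) z hzF).1 hzP
        have hdistF : ∀ w : HalfSpace n, w ∈ F → δ ≤ dist w.1 z.1 := by
          intro w hw
          by_contra hlt
          push_neg at hlt
          exact (hδsub (show w ∈ Subtype.val ⁻¹' ball z.1 δ from mem_ball.2 hlt)) hw
        obtain ⟨k, hk⟩ := exists_nat_one_div_lt (half_pos hδ0)
        rcases hzU' k with h | h | h
        · obtain ⟨w, hw⟩ := mem_iUnion.1 h
          obtain ⟨hwF, hball⟩ := mem_iUnion.1 hw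
          have h1 : dist z.1 w.1 < min (1/(k+1:ℝ)) (lastCoord n w.1 / 2) := hball
          have h2 := hdistF w hwF.1
          rw [dist_comm] at h2
          have h3 := min_le_left (1/(k+1:ℝ)) (lastCoord n w.1 / 2)
          linarith
        · obtain ⟨w, hw⟩ := mem_iUnion.1 h
          obtain ⟨hwF, htb⟩ := mem_iUnion.1 hw
          have h2 := hdistF w hwF.1
          have h3 : dist z.1 w.1 < 2 * (1/(k+1:ℝ)) := by
            rcases htb with heq | hball
            · rw [show z.1 = w.1 from heq, dist_self]; positivity
            · have h4 : dist (w.1 + (1/(k+1:ℝ)) • eVec n) w.1 = 1/(k+1:ℝ) := by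
                rw [dist_add_smul_eVec_self hn, abs_of_pos (by positivity)]
              have h5 : dist z.1 (w.1 + (1/(k+1:ℝ)) • eVec n) < 1/(k+1:ℝ) := hball
              calc dist z.1 w.1 ≤ dist z.1 (w.1 + (1/(k+1:ℝ)) • eVec n)
                    + dist (w.1 + (1/(k+1:ℝ)) • eVec n) w.1 := dist_triangle _ _ _
                _ < 2 * (1/(k+1:ℝ)) := by rw [h4]; linarith
          rw [dist_comm] at h2
          linarith
        · obtain ⟨w, hw⟩ := mem_iUnion.1 h
          obtain ⟨hwF, hball⟩ := mem_iUnion.1 hw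
          have h1 : dist z.1 w.1 < min (1/(k+1:ℝ)) (r k w hwF.2) := hball
          have h2 := hdistF w hwF.1
          rw [dist_comm] at h2
          have h3 := min_le_left (1/(k+1:ℝ)) (r k w hwF.2)
          linarith
      · by_cases hzA : z.1 ∈ A
        · -- z.1 ∈ A but z ∉ F : use the O_j family
          have hzW : z.1 ∈ WE :=
            mem_iUnion.2 ⟨z, mem_iUnion.2 ⟨⟨hzA, hzF⟩, mem_ball_self (hs0 z hzA hzF)⟩⟩
          obtain ⟨j, hj⟩ := hWD z.1 hzL.symm hzW
          have hzOj : z ∈ O j := mem_iInter.1 hzO j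
          have hOj : O j = _ := congrFun hO j
          rw [hOj, dif_pos ⟨z.1, hj⟩] at hzOj
          rcases hzOj with h | h | h
          · obtain ⟨w, hw⟩ := mem_iUnion.1 h
            obtain ⟨hwF, hball⟩ := mem_iUnion.1 hw
            have h1 : 0 < lastCoord n z.1 :=
              lastCoord_pos_of_mem_ball hn (by linarith [hwF.2]) hball
            rw [← hzL] at h1; exact lt_irrefl _ h1
          · obtain ⟨w, hw⟩ := mem_iUnion.1 h
            obtain ⟨hwF, htb⟩ := mem_iUnion.1 hw
            have heq : z.1 = w.1 := eq_of_mem_tangentBall_bdry hn hwF.2.1 htb hzL.symm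
            exact hzF (by rw [Subtype.ext heq]; exact hwF.1)
          · obtain ⟨w, hw⟩ := mem_iUnion.1 h
            obtain ⟨hwF, hball⟩ := mem_iUnion.1 hw
            have h1 : dist z.1 w.1 < infDist w.1 (D j) := hball
            have h2 : infDist w.1 (D j) ≤ dist w.1 z.1 := infDist_le_dist_of_mem hj
            rw [dist_comm] at h2
            linarith
        · -- z.1 ∈ L \ A : use the U_k family
          apply hzA
          have hmem : ∀ k, (⟨z.1, hzL.symm⟩ : Bdry n) ∈ g k := by
            intro k
            rcases hzU' k with h | h | h
            · obtain ⟨w, hw⟩ := mem_iUnion.1 h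
              obtain ⟨hwF, hball⟩ := mem_iUnion.1 hw
              have h1 : 0 < lastCoord n z.1 :=
                lastCoord_pos_of_mem_ball hn (by
                  have := hwF.2; linarith [min_le_right (1/(k+1:ℝ)) (lastCoord n w.1 / 2)]) hball
              rw [← hzL] at h1; exact absurd h1 (lt_irrefl _)
            · obtain ⟨w, hw⟩ := mem_iUnion.1 h
              obtain ⟨hwF, htb⟩ := mem_iUnion.1 hw
              have heq : z.1 = w.1 := eq_of_mem_tangentBall_bdry hn hwF.2.1 htb hzL.symm
              exact absurd (by rw [Subtype.ext heq]; exact hwF.1) hzF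
            · obtain ⟨w, hw⟩ := mem_iUnion.1 h
              obtain ⟨hwF, hball⟩ := mem_iUnion.1 hw
              apply hrsub k w hwF.2
              show z.1 ∈ ball w.1 (r k w hwF.2)
              exact ball_subset_ball (min_le_right _ _) hball
          have : (⟨z.1, hzL.symm⟩ : Bdry n) ∈ (Subtype.val ⁻¹' A : Set (Bdry n)) := by
            rw [hgA]; exact mem_iInter.2 hmem
          exact this
  rw [hFeq]
  exact (IsGδ.iInter_of_isOpen hUopen).inter (IsGδ.iInter_of_isOpen hOopen)

lemma lastCoord_zero : lastCoord n (0 : EuclideanSpace ℝ (Fin n)) = 0 := by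
  unfold lastCoord
  split_ifs with h
  · exact rfl
  · rfl

lemma zero_mem_halfSpace : (0 : EuclideanSpace ℝ (Fin n)) ∈ HalfSpace n :=
  le_of_eq lastCoord_zero.symm

/-- A subset of `L \ A` which is Euclidean-closed in `L` is `τ(A)`-closed in `X`
and discrete; complement openness. -/
lemma isOpen_compl_closed_subset (hn : 0 < n) (hA : A ⊆ Bdry n) {B : Set (EuclideanSpace ℝ (Fin n))}
    (hBsub : B ⊆ Bdry n \ A) (hBclE : IsClosed B) (hBne : B.Nonempty) :
    IsOpen[tau n A] ((Subtype.val ⁻¹' B : Set (HalfSpace n))ᶜ) := by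
  apply isOpen_tau_of_nbhds
  intro z hz
  have hz2 : (0:ℝ) ≤ lastCoord n z.1 := z.2
  rcases lt_or_eq_of_le hz2 with hzP | hzL
  · refine ⟨Subtype.val ⁻¹' ball z.1 (lastCoord n z.1 / 2),
      isOpen_gen1 hzP (half_pos hzP) (half_lt_self hzP), ?_, ?_⟩
    · show dist z.1 z.1 < _; rw [dist_self]; exact half_pos hzP
    · intro w hw hwB
      have h1 : 0 < lastCoord n w.1 := lastCoord_pos_of_mem_ball hn (by linarith) hw
      have h2 : lastCoord n w.1 = 0 := (hBsub hwB).1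
      rw [h2] at h1; exact lt_irrefl _ h1
  · have hzB : z.1 ∉ B := hz
    by_cases hzA : z.1 ∈ A
    · have hpos : 0 < infDist z.1 B := (hBclE.notMem_iff_infDist_pos hBne).1 hzB
      refine ⟨Subtype.val ⁻¹' ball z.1 (infDist z.1 B), isOpen_gen2 hzA hpos, ?_, ?_⟩
      · show dist z.1 z.1 < _; rw [dist_self]; exact hpos
      · intro w hw hwB
        have h1 : dist w.1 z.1 < infDist z.1 B := hw
        have h2 : infDist z.1 B ≤ dist z.1 w.1 := infDist_le_dist_of_mem hwB
        rw [dist_comm] at h2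
        linarith
    · refine ⟨Subtype.val ⁻¹' tangentBall n z.1 1, isOpen_gen3 ⟨hzL.symm, hzA⟩ one_pos,
        mem_tangentBall_self _ _, ?_⟩
      intro w hw hwB
      have heq : w.1 = z.1 := eq_of_mem_tangentBall_bdry hn hzL.symm hw (hBsub hwB).1
      have hwB' : w.1 ∈ B := hwB
      rw [heq] at hwB'
      exact hzB hwB'

/-- Direction 2a: Lindelöf implies no uncountable Euclidean-closed subset of `L \ A`. -/
lemma lindelof_to_noclosed (hn : 0 < n) (hA : A ⊆ Bdry n)
    (hL : @LindelofSpace (HalfSpace n) (tau n A)) :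
    ¬ ∃ B, B ⊆ Bdry n \ A ∧ ¬ B.Countable ∧
      IsClosed (Subtype.val ⁻¹' B : Set (Bdry n)) := by
  letI := tau n A
  rintro ⟨B, hBsub, hBunc, hBcl⟩
  have hBclE : IsClosed B := by
    have h1 : B = Subtype.val '' (Subtype.val ⁻¹' B : Set (Bdry n)) := by
      rw [Subtype.image_preimage_coe]
      exact (inter_eq_self_of_subset_right (fun x hx => (hBsub hx).1)).symm
    rw [h1]
    exact (isClosed_bdry.isClosedEmbedding_subtypeVal).isClosedMap _ hBcl
  have hBne : B.Nonempty := by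
    rcases B.eq_empty_or_nonempty with rfl | h
    · exact absurd countable_empty hBunc
    · exact h
  set Uc : Option {z : HalfSpace n // z.1 ∈ B} → Set (HalfSpace n) := fun i =>
    i.elim ((Subtype.val ⁻¹' B : Set (HalfSpace n))ᶜ)
      (fun b => Subtype.val ⁻¹' tangentBall n b.1.1 1) with hUc
  have hUo : ∀ i, IsOpen (Uc i) := by
    rintro (_ | b)
    · exact isOpen_compl_closed_subset hn hA hBsub hBclE hBne
    · exact isOpen_gen3 (hBsub b.2) one_pos
  have hUcov : (univ : Set (HalfSpace n)) ⊆ ⋃ i, Uc i := by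
    intro z _
    by_cases hzB : z.1 ∈ B
    · exact mem_iUnion.2 ⟨some ⟨z, hzB⟩, mem_tangentBall_self _ _⟩
    · exact mem_iUnion.2 ⟨none, hzB⟩
  obtain ⟨t, htc, hcov⟩ := (isLindelof_univ_iff.2 hL).elim_countable_subcover Uc hUo hUcov
  apply hBunc
  have hmap : B ⊆ (fun i : Option {z : HalfSpace n // z.1 ∈ B} =>
      i.elim (0 : EuclideanSpace ℝ (Fin n)) (fun b => b.1.1)) '' t := by
    intro x hx
    have hxH : x ∈ HalfSpace n := le_of_eq (hBsub hx).1.symm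
    have hz : (⟨x, hxH⟩ : HalfSpace n) ∈ ⋃ i ∈ t, Uc i := hcov (mem_univ _)
    obtain ⟨i, hit, hzi⟩ := mem_iUnion₂.1 hz
    rcases i with _ | b
    · exact absurd hx hzi
    · have heq : x = b.1.1 :=
        eq_of_mem_tangentBall_bdry hn (hBsub b.2).1 hzi (hBsub hx).1
      exact ⟨some b, hit, heq.symm⟩
  exact (htc.image _).mono hmap

/-- Direction 2b: if `L \ A` contains no uncountable Euclidean-closed subset, then
`(X, τ(A))` is Lindelöf. -/
lemma noclosed_to_lindelof (hn : 0 < n) (hA : A ⊆ Bdry n)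
    (hB : ¬ ∃ B, B ⊆ Bdry n \ A ∧ ¬ B.Countable ∧
      IsClosed (Subtype.val ⁻¹' B : Set (Bdry n))) :
    @LindelofSpace (HalfSpace n) (tau n A) := by
  classical
  letI := tau n A
  constructor
  apply isLindelof_of_countable_subcover
  intro ι Uc hUo hUcov
  -- a default index
  obtain ⟨i₀, _⟩ := mem_iUnion.1 (hUcov (mem_univ (⟨0, zero_mem_halfSpace⟩ : HalfSpace n)))
  -- choices
  have hPc : ∀ z : HalfSpace n, 0 < lastCoord n z.1 → ∃ i δ, 0 < δ ∧
      (Subtype.val ⁻¹' ball z.1 δ : Set (HalfSpace n)) ⊆ Uc i := by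
    intro z hz
    obtain ⟨i, hi⟩ := mem_iUnion.1 (hUcov (mem_univ z))
    obtain ⟨δ, hδ0, hδlast, hδsub⟩ := ((tau_nbhd hn hA (hUo i)) z hi).1 hz
    exact ⟨i, δ, hδ0, hδsub⟩
  choose iP δP hδP hsubP using hPc
  have hAc : ∀ z : HalfSpace n, z.1 ∈ A → ∃ i ρ, 0 < ρ ∧
      (Subtype.val ⁻¹' ball z.1 ρ : Set (HalfSpace n)) ⊆ Uc i := by
    intro z hz
    obtain ⟨i, hi⟩ := mem_iUnion.1 (hUcov (mem_univ z))
    obtain ⟨ρ, hρ0, hρsub⟩ := ((tau_nbhd hn hA (hUo i)) z hi).2.1 hz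
    exact ⟨i, ρ, hρ0, hρsub⟩
  choose iA ρA hρA hsubA using hAc
  have hLc : ∀ z : HalfSpace n, ∃ i, z ∈ Uc i := fun z => mem_iUnion.1 (hUcov (mem_univ z))
  choose iL hiL using hLc
  -- countable subcover over the open half-space
  obtain ⟨tP, htPc, htPcov⟩ := (HereditarilyLindelof_LindelofSets (OpenHalf n)).elim_countable_subcover
    (fun w : {z : HalfSpace n // 0 < lastCoord n z.1} => ball w.1.1 (δP w.1 w.2))
    (fun w => isOpen_ball) (by
      intro x hx
      have hx' : (0:ℝ) < lastCoord n x := hx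
      have hxH : x ∈ HalfSpace n := le_of_lt hx'
      exact mem_iUnion.2 ⟨⟨⟨x, hxH⟩, hx'⟩, mem_ball_self (hδP _ hx')⟩)
  -- countable subcover of the union of the boundary balls
  set GE : Set (EuclideanSpace ℝ (Fin n)) :=
    ⋃ w : {z : HalfSpace n // z.1 ∈ A}, ball w.1.1 (ρA w.1 w.2) with hGE
  obtain ⟨tA, htAc, htAcov⟩ := (HereditarilyLindelof_LindelofSets GE).elim_countable_subcover
    (fun w : {z : HalfSpace n // z.1 ∈ A} => ball w.1.1 (ρA w.1 w.2))
    (fun w => isOpen_ball) (subset_refl _)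
  -- the leftover boundary set is countable
  set B : Set (EuclideanSpace ℝ (Fin n)) := Bdry n \ GE with hBdef
  have hBsub : B ⊆ Bdry n \ A := by
    rintro x ⟨hx1, hx2⟩
    refine ⟨hx1, fun hxA => hx2 ?_⟩
    have hxH : x ∈ HalfSpace n := le_of_eq hx1.symm
    exact mem_iUnion.2 ⟨⟨⟨x, hxH⟩, hxA⟩, mem_ball_self (hρA _ hxA)⟩
  have hBcl : IsClosed (Subtype.val ⁻¹' B : Set (Bdry n)) := by
    have h1 : (Subtype.val ⁻¹' B : Set (Bdry n)) = (Subtype.val ⁻¹' GE)ᶜ := by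
      ext y
      simp only [mem_preimage, mem_compl_iff, hBdef, mem_diff]
      exact ⟨fun h => h.2, fun h => ⟨y.2, h⟩⟩
    rw [h1]
    exact (IsOpen.preimage continuous_subtype_val (isOpen_iUnion fun w => isOpen_ball)).isClosed_compl
  have hBcount : B.Countable := by
    by_contra hc
    exact hB ⟨B, hBsub, hc, hBcl⟩
  -- assemble the countable index set
  set fB : EuclideanSpace ℝ (Fin n) → ι := fun x =>
    if h : x ∈ HalfSpace n then iL ⟨x, h⟩ else i₀ with hfB
  set t : Set ι := ((fun w : {z : HalfSpace n // 0 < lastCoord n z.1} => iP w.1 w.2) '' tP) ∪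
    (((fun w : {z : HalfSpace n // z.1 ∈ A} => iA w.1 w.2) '' tA) ∪ (fB '' B)) with ht
  refine ⟨t, (htPc.image _).union ((htAc.image _).union (hBcount.image _)), ?_⟩
  intro z _
  have hz2 : (0:ℝ) ≤ lastCoord n z.1 := z.2
  rcases lt_or_eq_of_le hz2 with hzP | hzL
  · have hzO : z.1 ∈ OpenHalf n := hzP
    obtain ⟨w, hwt, hball⟩ := mem_iUnion₂.1 (htPcov hzO)
    refine mem_iUnion₂.2 ⟨iP w.1 w.2, Or.inl ⟨w, hwt, rfl⟩, ?_⟩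
    exact hsubP w.1 w.2 hball
  · by_cases hzG : z.1 ∈ GE
    · obtain ⟨w, hwt, hball⟩ := mem_iUnion₂.1 (htAcov hzG)
      refine mem_iUnion₂.2 ⟨iA w.1 w.2, Or.inr (Or.inl ⟨w, hwt, rfl⟩), ?_⟩
      exact hsubA w.1 w.2 hball
    · have hzB : z.1 ∈ B := ⟨hzL.symm, hzG⟩
      refine mem_iUnion₂.2 ⟨fB z.1, Or.inr (Or.inr ⟨z.1, hzB, rfl⟩), ?_⟩
      rw [hfB]
      simp only [dif_pos z.2]
      have : (⟨z.1, z.2⟩ : HalfSpace n) = z := Subtype.ext rfl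
      rw [this]
      exact hiL z

lemma isClosed_Lpre (hn : 0 < n) (hA : A ⊆ Bdry n) :
    IsClosed[tau n A] (Subtype.val ⁻¹' Bdry n : Set (HalfSpace n)) := by
  letI := tau n A
  rw [← isOpen_compl_iff]
  apply isOpen_tau_of_nbhds
  intro z hz
  have hzne : ¬ (lastCoord n z.1 = 0) := hz
  have hzP : 0 < lastCoord n z.1 := lt_of_le_of_ne z.2 (fun h => hzne h.symm)
  refine ⟨Subtype.val ⁻¹' ball z.1 (lastCoord n z.1 / 2),
    isOpen_gen1 hzP (half_pos hzP) (half_lt_self hzP), ?_, ?_⟩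
  · show dist z.1 z.1 < _; rw [dist_self]; exact half_pos hzP
  · intro w hw hwB
    have h1 : 0 < lastCoord n w.1 := lastCoord_pos_of_mem_ball hn (by linarith) hw
    have h2 : lastCoord n w.1 = 0 := hwB
    rw [h2] at h1; exact lt_irrefl _ h1

/-- Points of a set each isolated in a set `C` form a countable set. -/
lemma countable_of_isolated_in {C S : Set (EuclideanSpace ℝ (Fin n))} (hSC : S ⊆ C)
    (h : ∀ x ∈ S, ∃ ε, 0 < ε ∧ ball x ε ∩ C ⊆ {x}) : S.Countable := by
  classical
  have hmain : ∀ x ∈ S, ∃ v ∈ countableBasis (EuclideanSpace ℝ (Fin n)),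
      x ∈ v ∧ v ∩ C ⊆ {x} := by
    intro x hx
    obtain ⟨ε, hε, hsub⟩ := h x hx
    obtain ⟨v, hvb, hxv, hvsub⟩ := (isBasis_countableBasis (EuclideanSpace ℝ (Fin n))).exists_subset_of_mem_open
      (mem_ball_self hε) isOpen_ball
    exact ⟨v, hvb, hxv, fun y hy => hsub ⟨hvsub hy.1, hy.2⟩⟩
  choose! f hfb hxf hfsub using hmain
  apply countable_of_injective_of_countable_image (f := f)
  · intro x hx y hy hfxy
    have : y ∈ f x ∩ C := ⟨hfxy ▸ hxf y hy, hSC hy⟩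
    exact (show y = x from (hfsub x hx) this).symm
  · exact Countable.mono (image_subset_iff.2 fun x hx => hfb x hx)
      (countable_countableBasis (EuclideanSpace ℝ (Fin n)))

/-- Direction 3a: σ-compact implies `A` is Fσ in `L` and `L \ A` is countable. -/
lemma sigmacompact_to_fsigma (hn : 0 < n) (hA : A ⊆ Bdry n)
    (hS : @SigmaCompactSpace (HalfSpace n) (tau n A)) :
    IsFsigma (Subtype.val ⁻¹' A : Set (Bdry n)) ∧ (Bdry n \ A).Countable := by
  classical
  letI := tau n A
  obtain ⟨K, hKc, hKcov⟩ := SigmaCompactSpace.isSigmaCompact_univ (X := HalfSpace n)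
  have hvalcont : Continuous (Subtype.val : HalfSpace n → EuclideanSpace ℝ (Fin n)) :=
    continuous_val_tau hn hA
  set C : ℕ → Set (HalfSpace n) := fun m => K m ∩ (Subtype.val ⁻¹' Bdry n) with hC
  have hCc : ∀ m, IsCompact (C m) := fun m => (hKc m).inter_right (isClosed_Lpre hn hA)
  set CE : ℕ → Set (EuclideanSpace ℝ (Fin n)) := fun m => Subtype.val '' (C m) with hCE
  have hCEB : ∀ m, CE m ⊆ Bdry n := by rintro m x ⟨z, hz, rfl⟩; exact hz.2
  have hcover : ∀ x : EuclideanSpace ℝ (Fin n), x ∈ Bdry n → ∃ m, x ∈ CE m := by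
    intro x hx
    have hxH : x ∈ HalfSpace n := le_of_eq hx.symm
    have h1 : (⟨x, hxH⟩ : HalfSpace n) ∈ ⋃ m, K m := hKcov ▸ mem_univ _
    obtain ⟨m, hm⟩ := mem_iUnion.1 h1
    exact ⟨m, ⟨⟨x, hxH⟩, ⟨hm, hx⟩, rfl⟩⟩
  have hiso : ∀ m, ∀ x ∈ CE m \ A, ∃ ε, 0 < ε ∧ ball x ε ∩ CE m ⊆ {x} := by
    intro m x hx
    have hxB : x ∈ Bdry n := hCEB m hx.1
    have hxH : x ∈ HalfSpace n := le_of_eq hxB.symm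
    set z : HalfSpace n := ⟨x, hxH⟩ with hzdef
    have hzopen : IsOpen (Subtype.val ⁻¹' tangentBall n x 1 : Set (HalfSpace n)) :=
      isOpen_gen3 ⟨hxB, hx.2⟩ one_pos
    have hdiff : C m \ {z} = C m ∩ (Subtype.val ⁻¹' tangentBall n x 1)ᶜ := by
      ext w
      simp only [mem_diff, mem_inter_iff, mem_singleton_iff, mem_compl_iff, mem_preimage]
      constructor
      · rintro ⟨hw, hwz⟩
        refine ⟨hw, fun htb => hwz ?_⟩
        exact Subtype.ext (eq_of_mem_tangentBall_bdry hn hxB htb hw.2)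
      · rintro ⟨hw, hwt⟩
        exact ⟨hw, fun hwz => hwt (by rw [hwz]; exact mem_tangentBall_self _ _)⟩
    have hcomp : IsCompact (C m \ {z}) := by
      rw [hdiff]; exact (hCc m).inter_right hzopen.isClosed_compl
    have hclE : IsClosed (Subtype.val '' (C m \ {z})) := (hcomp.image hvalcont).isClosed
    have himg : Subtype.val '' (C m \ {z}) = CE m \ {x} := by
      rw [image_diff Subtype.coe_injective, image_singleton]
    have hxnot : x ∈ (Subtype.val '' (C m \ {z}))ᶜ := by
      rw [himg]; intro hmem; exact hmem.2 rfl
    obtain ⟨ε, hε, hsub⟩ := Metric.isOpen_iff.1 hclE.isOpen_compl x hxnot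
    refine ⟨ε, hε, ?_⟩
    intro y hy
    by_contra hyx
    have h2 : y ∈ (Subtype.val '' (C m \ {z}))ᶜ := hsub hy.1
    rw [himg] at h2
    exact h2 ⟨hy.2, hyx⟩
  constructor
  · have hclosedA : ∀ m, IsClosed (CE m ∩ A) := by
      intro m
      have h1 : IsCompact (C m ∩ (Subtype.val ⁻¹' A)) :=
        (hCc m).inter_right (isClosed_Apre hn hA)
      have h2 : Subtype.val '' (C m ∩ Subtype.val ⁻¹' A) = CE m ∩ A :=
        image_inter_preimage _ _ _
      have h3 : IsCompact (CE m ∩ A) := h2 ▸ h1.image hvalcont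
      exact h3.isClosed
    refine ⟨fun m => Subtype.val ⁻¹' (CE m ∩ A),
      fun m => (hclosedA m).preimage continuous_subtype_val, ?_⟩
    ext y
    simp only [mem_preimage, mem_iUnion, mem_inter_iff]
    constructor
    · intro hy
      obtain ⟨m, hm⟩ := hcover y.1 y.2
      exact ⟨m, hm, hy⟩
    · rintro ⟨m, _, hy⟩; exact hy
  · have heq : Bdry n \ A = ⋃ m, (CE m \ A) := by
      ext x
      constructor
      · intro hx
        obtain ⟨m, hm⟩ := hcover x hx.1
        exact mem_iUnion.2 ⟨m, hm, hx.2⟩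
      · intro hx
        obtain ⟨m, hm⟩ := mem_iUnion.1 hx
        exact ⟨hCEB m hm.1, hm.2⟩
    rw [heq]
    exact countable_iUnion fun m => countable_of_isolated_in diff_subset (hiso m)

/-- Direction 3b: if `A` is Fσ in `L` and `L \ A` is countable, then `(X, τ(A))` is σ-compact. -/
lemma fsigma_to_sigmacompact (hn : 0 < n) (hA : A ⊆ Bdry n)
    (hFσ : IsFsigma (Subtype.val ⁻¹' A : Set (Bdry n))) (hcnt : (Bdry n \ A).Countable) :
    @SigmaCompactSpace (HalfSpace n) (tau n A) := by
  classical
  letI := tau n A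
  obtain ⟨F, hFcl, hFeq⟩ := hFσ
  set Qset : ℕ → Set (HalfSpace n) :=
    fun m => {z : HalfSpace n | ‖z.1‖ ≤ m ∧ 1/(m+1:ℝ) ≤ lastCoord n z.1} with hQset
  have hQ : ∀ m : ℕ, IsCompact (Qset m) := by
    intro m
    apply isCompact_of_finite_subcover
    intro κ Uc hUo hUcov
    have hch : ∀ z : HalfSpace n, z ∈ Qset m →
        ∃ i δ, 0 < δ ∧ (Subtype.val ⁻¹' ball z.1 δ : Set (HalfSpace n)) ⊆ Uc i := by
      intro z hz
      obtain ⟨i, hi⟩ := mem_iUnion.1 (hUcov hz)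
      have hzP : 0 < lastCoord n z.1 := lt_of_lt_of_le (by positivity) hz.2
      obtain ⟨δ, h0, _, hsub⟩ := ((tau_nbhd hn hA (hUo i)) z hi).1 hzP
      exact ⟨i, δ, h0, hsub⟩
    choose iC δC hδC hsubC using hch
    have hQE : IsCompact (closedBall (0:EuclideanSpace ℝ (Fin n)) m ∩
        {x | 1/(m+1:ℝ) ≤ lastCoord n x}) :=
      (isCompact_closedBall _ _).inter_right (isClosed_le continuous_const continuous_lastCoord)
    obtain ⟨t, htsub⟩ := hQE.elim_finite_subcover
      (fun w : {z : HalfSpace n // z ∈ Qset m} => ball w.1.1 (δC w.1 w.2))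
      (fun w => isOpen_ball) (by
        rintro x ⟨hx1, hx2⟩
        have hxH : x ∈ HalfSpace n :=
          le_trans (show (0:ℝ) ≤ 1/(m+1:ℝ) by positivity) hx2
        have hxQ : (⟨x, hxH⟩ : HalfSpace n) ∈ Qset m :=
          ⟨mem_closedBall_zero_iff.1 hx1, hx2⟩
        exact mem_iUnion.2 ⟨⟨⟨x, hxH⟩, hxQ⟩, mem_ball_self (hδC _ hxQ)⟩)
    refine ⟨t.image (fun w => iC w.1 w.2), ?_⟩
    intro z hz
    have hzE : z.1 ∈ closedBall (0:EuclideanSpace ℝ (Fin n)) m ∩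
        {x | 1/(m+1:ℝ) ≤ lastCoord n x} := ⟨mem_closedBall_zero_iff.2 hz.1, hz.2⟩
    obtain ⟨w, hwt, hball⟩ := mem_iUnion₂.1 (htsub hzE)
    exact mem_iUnion₂.2 ⟨iC w.1 w.2, Finset.mem_image_of_mem _ hwt, hsubC w.1 w.2 hball⟩
  have hCA : ∀ C : Set (EuclideanSpace ℝ (Fin n)), IsCompact C → C ⊆ A →
      IsCompact (Subtype.val ⁻¹' C : Set (HalfSpace n)) := by
    intro C hC hCsubA
    apply isCompact_of_finite_subcover
    intro κ Uc hUo hUcov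
    have hch : ∀ z : HalfSpace n, z ∈ (Subtype.val ⁻¹' C : Set (HalfSpace n)) →
        ∃ i ρ, 0 < ρ ∧ (Subtype.val ⁻¹' ball z.1 ρ : Set (HalfSpace n)) ⊆ Uc i := by
      intro z hz
      obtain ⟨i, hi⟩ := mem_iUnion.1 (hUcov hz)
      obtain ⟨ρ, h0, hsub⟩ := ((tau_nbhd hn hA (hUo i)) z hi).2.1 (hCsubA hz)
      exact ⟨i, ρ, h0, hsub⟩
    choose iC ρC hρC hsubC using hch
    obtain ⟨t, htsub⟩ := hC.elim_finite_subcover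
      (fun w : {z : HalfSpace n // z ∈ (Subtype.val ⁻¹' C : Set (HalfSpace n))} =>
        ball w.1.1 (ρC w.1 w.2)) (fun w => isOpen_ball) (by
        intro x hx
        have hxH : x ∈ HalfSpace n := le_of_eq (hA (hCsubA hx)).symm
        exact mem_iUnion.2 ⟨⟨⟨x, hxH⟩, hx⟩, mem_ball_self (hρC ⟨x, hxH⟩ hx)⟩)
    refine ⟨t.image (fun w => iC w.1 w.2), ?_⟩
    intro z hz
    obtain ⟨w, hwt, hball⟩ := mem_iUnion₂.1 (htsub (show z.1 ∈ C from hz))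
    exact mem_iUnion₂.2 ⟨iC w.1 w.2, Finset.mem_image_of_mem _ hwt, hsubC w.1 w.2 hball⟩
  have hsing : ∀ x : EuclideanSpace ℝ (Fin n),
      IsCompact (Subtype.val ⁻¹' ({x} : Set (EuclideanSpace ℝ (Fin n))) : Set (HalfSpace n)) := by
    intro x
    apply Set.Subsingleton.isCompact
    intro a ha b hb
    exact Subtype.ext ((show a.1 = x from ha).trans (show b.1 = x from hb).symm)
  -- enumeration of L \ A
  obtain ⟨f, hf⟩ : ∃ f : ℕ → EuclideanSpace ℝ (Fin n),
      Bdry n \ A ⊆ range f := by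
    rcases (Bdry n \ A).eq_empty_or_nonempty with h | h
    · exact ⟨fun _ => 0, by rw [h]; exact empty_subset _⟩
    · obtain ⟨f, hf⟩ := hcnt.exists_eq_range h
      exact ⟨f, hf.le⟩
  -- the closed pieces of A are compact after truncation
  have hFclE : ∀ i, IsClosed (Subtype.val '' F i : Set (EuclideanSpace ℝ (Fin n))) :=
    fun i => (isClosed_bdry.isClosedEmbedding_subtypeVal).isClosedMap _ (hFcl i)
  have hFiA : ∀ i, (Subtype.val '' F i : Set (EuclideanSpace ℝ (Fin n))) ⊆ A := by
    rintro i x ⟨y, hy, rfl⟩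
    have : y ∈ (Subtype.val ⁻¹' A : Set (Bdry n)) := by
      rw [hFeq]; exact mem_iUnion.2 ⟨i, hy⟩
    exact this
  have hFic : ∀ (i : ℕ) (m : ℕ), IsCompact ((Subtype.val '' F i) ∩
      closedBall (0:EuclideanSpace ℝ (Fin n)) m) := by
    intro i m
    rw [inter_comm]
    exact (isCompact_closedBall _ _).inter_right (hFclE i)
  -- assemble
  set G : ℕ ⊕ ((ℕ × ℕ) ⊕ ℕ) → Set (HalfSpace n) :=
    Sum.elim Qset (Sum.elim
      (fun p : ℕ × ℕ =>
        Subtype.val ⁻¹' ((Subtype.val '' F p.1) ∩ closedBall (0:EuclideanSpace ℝ (Fin n)) p.2))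
      (fun j => Subtype.val ⁻¹' ({f j} : Set (EuclideanSpace ℝ (Fin n))))) with hG
  have hGc : ∀ i, IsCompact (G i) := by
    rintro (m | p | j)
    · exact hQ m
    · exact hCA _ (hFic p.1 p.2) (fun x hx => hFiA p.1 hx.1)
    · exact hsing (f j)
  have hGcov : ⋃ i, G i = univ := by
    apply eq_univ_of_forall
    intro z
    have hz2 : (0:ℝ) ≤ lastCoord n z.1 := z.2
    rcases lt_or_eq_of_le hz2 with hzP | hzL
    · obtain ⟨m, hm⟩ := exists_nat_ge (max ‖z.1‖ (1/lastCoord n z.1))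
      refine mem_iUnion.2 ⟨Sum.inl m, le_trans (le_max_left _ _) hm, ?_⟩
      have h1 : 1/lastCoord n z.1 ≤ (m:ℝ)+1 := by
        have := le_max_right ‖z.1‖ (1/lastCoord n z.1); linarith
      have h2 := one_div_le_one_div_of_le (one_div_pos.2 hzP) h1
      rwa [one_div_one_div] at h2
    · by_cases hzA : z.1 ∈ A
      · have hyB : (⟨z.1, hzL.symm⟩ : Bdry n) ∈ (Subtype.val ⁻¹' A : Set (Bdry n)) := hzA
        rw [hFeq] at hyB
        obtain ⟨i, hi⟩ := mem_iUnion.1 hyB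
        obtain ⟨m, hm⟩ := exists_nat_ge ‖z.1‖
        exact mem_iUnion.2 ⟨Sum.inr (Sum.inl (i, m)),
          ⟨⟨⟨z.1, hzL.symm⟩, hi, rfl⟩, mem_closedBall_zero_iff.2 hm⟩⟩
      · have hzB : z.1 ∈ Bdry n \ A := ⟨hzL.symm, hzA⟩
        obtain ⟨j, hj⟩ := hf hzB
        exact mem_iUnion.2 ⟨Sum.inr (Sum.inr j), hj.symm⟩
  refine ⟨⟨G ∘ (Denumerable.eqv (ℕ ⊕ ((ℕ × ℕ) ⊕ ℕ))).symm, fun k => hGc _, ?_⟩⟩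
  exact (Function.Surjective.iUnion_comp ((Denumerable.eqv (ℕ ⊕ ((ℕ × ℕ) ⊕ ℕ))).symm.surjective) G).trans hGcov

end AuxNiemytzki

/-- For every `n ≥ 2` and `A ⊆ L`: `(X, τ(A))` is perfect iff `A` is a `Gδ`-set in
`(L, τ_E|_L)`; it is Lindelöf iff `L \ A` contains no uncountable Euclidean-closed subset of
`L`; and it is σ-compact iff `A` is an `Fσ`-set in `(L, τ_E|_L)` and `L \ A` is countable. -/
theorem tauA_perfect_lindelof_sigmaCompact_iff (n : ℕ) (hn : 2 ≤ n)
    (A : Set (EuclideanSpace ℝ (Fin n))) (hA : A ⊆ Bdry n) :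
    (@IsPerfectSpace (HalfSpace n) (tau n A) ↔ IsGδ (Subtype.val ⁻¹' A : Set (Bdry n))) ∧
    (@LindelofSpace (HalfSpace n) (tau n A) ↔
      ¬ ∃ B, B ⊆ Bdry n \ A ∧ ¬ B.Countable ∧
        IsClosed (Subtype.val ⁻¹' B : Set (Bdry n))) ∧
    (@SigmaCompactSpace (HalfSpace n) (tau n A) ↔
      IsFsigma (Subtype.val ⁻¹' A : Set (Bdry n)) ∧ (Bdry n \ A).Countable) := by
  have hn0 : 0 < n := by omega
  exact ⟨⟨perfect_to_gdelta hn0 hA, gdelta_to_perfect hn0 hA⟩,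
    ⟨lindelof_to_noclosed hn0 hA, noclosed_to_lindelof hn0 hA⟩,
    ⟨fun h => sigmacompact_to_fsigma hn0 hA h,
     fun h => fsigma_to_sigmacompact hn0 hA h.1 h.2⟩⟩
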